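/- arXiv:1503.03783 — 5 statements merged into one kernel-verified Lean document; each statement's English description precedes it below -/
import Mathlib

section
/- Let H be a real Hilbert space, K ⊆ H nonempty closed convex, a a bounded symmetric coercive bilinear form on H with coercivity constant c₁ > 0, λ > 0, φ ∈ K, and ℓ ∈ H* a bounded linear functional. Let φ̄ ∈ K satisfy the variational inequality a(φ̄ − φ, η − φ̄) + λ·ℓ(η − φ̄) ≥ 0 for all η ∈ K, and set v := φ̄ − φ. Then ℓ(v) ≤ −(c₁/λ)·‖v‖², i.e. v is a descent direction for any functional whose derivative at φ is ℓ (whenever v ≠ 0). -/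
/-- If `φ̄ ∈ K` satisfies the variational inequality
`a(φ̄ − φ, η − φ̄) + λ·ℓ(η − φ̄) ≥ 0` for all `η ∈ K`, then `v := φ̄ − φ` satisfies
`ℓ(v) ≤ −(c₁/λ)·‖v‖²`, i.e. `v` is a descent direction. -/
theorem stmt_1 {H : Type*} [NormedAddCommGroup H] [InnerProductSpace ℝ H] [CompleteSpace H]
    (K : Set H) (hKne : K.Nonempty) (hKcl : IsClosed K) (hKcv : Convex ℝ K)
    (a : H →ₗ[ℝ] H →ₗ[ℝ] ℝ) (hsym : ∀ p y, a p y = a y p)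
    (C : ℝ) (hbdd : ∀ p y, |a p y| ≤ C * ‖p‖ * ‖y‖)
    (c₁ : ℝ) (hc₁ : 0 < c₁) (hcoer : ∀ p, c₁ * ‖p‖ ^ 2 ≤ a p p)
    (lam : ℝ) (hlam : 0 < lam)
    (φ : H) (hφ : φ ∈ K) (ℓ : H →L[ℝ] ℝ)
    (φbar : H) (hφbar : φbar ∈ K)
    (hVI : ∀ η ∈ K, 0 ≤ a (φbar - φ) (η - φbar) + lam * ℓ (η - φbar))
    (v : H) (hv : v = φbar - φ) :
    ℓ v ≤ -(c₁ / lam) * ‖v‖ ^ 2 := by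
  have h := hVI φ hφ
  have hneg : φ - φbar = -v := by rw [hv]; abel
  rw [hneg] at h
  simp only [map_neg, mul_neg] at h
  have hav : c₁ * ‖v‖ ^ 2 ≤ a v v := by rw [hv]; exact hcoer _
  rw [hv] at h ⊢
  set w := φbar - φ
  have h1 : lam * ℓ w ≤ -(a w w) := by linarith
  have h2 : lam * ℓ w ≤ -(c₁ * ‖w‖ ^ 2) := by
    have := hcoer w
    linarith
  have heq : -(c₁ / lam) * ‖w‖ ^ 2 = -(c₁ * ‖w‖ ^ 2) / lam := by ring
  rw [heq, le_div_iff₀ hlam]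
  linarith
end

section
/- Let {x_k} and {α_k} be real sequences with x_k ≥ 0, α_k ≥ 0, α_k → 0, x_k·α_k → 0, and suppose there exist c > 0 and 0 < γ ≤ 1 such that x_k ≤ c·(x_k^{(1+γ)/2}·α_k^γ + α_k^γ) for all k. Then x_k → 0. -/
open Filter Topology

/-- bootstrap lemma. If `x_k ≥ 0`, `α_k ≥ 0`, `α_k → 0`, `x_k·α_k → 0` and
`x_k ≤ c (x_k^{(1+γ)/2} α_k^γ + α_k^γ)` for some `c > 0`, `0 < γ ≤ 1`, then `x_k → 0`. -/
theorem stmt_4 (x α : ℕ → ℝ) (hx : ∀ k, 0 ≤ x k) (hα : ∀ k, 0 ≤ α k)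
    (hαto0 : Tendsto α atTop (𝓝 0)) (hxαto0 : Tendsto (fun k => x k * α k) atTop (𝓝 0))
    (c γ : ℝ) (hc : 0 < c) (hγ : 0 < γ) (hγ1 : γ ≤ 1)
    (hineq : ∀ k, x k ≤ c * (x k ^ ((1 + γ) / 2) * α k ^ γ + α k ^ γ)) :
    Tendsto x atTop (𝓝 0) := by
  have hγne : γ ≠ 0 := hγ.ne'
  have hαγ : Tendsto (fun k => α k ^ γ) atTop (𝓝 0) := by
    have := (Real.continuousAt_rpow_const 0 γ (Or.inr hγ.le)).tendsto.comp hαto0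
    simpa [Function.comp_def, Real.zero_rpow hγne] using this
  have hxαγ : Tendsto (fun k => (x k * α k) ^ γ) atTop (𝓝 0) := by
    have := (Real.continuousAt_rpow_const 0 γ (Or.inr hγ.le)).tendsto.comp hxαto0
    simpa [Function.comp_def, Real.zero_rpow hγne] using this
  have hA : ∀ᶠ k in atTop, c * (x k * α k) ^ γ ≤ 1/2 := by
    have h : Tendsto (fun k => c * (x k * α k) ^ γ) atTop (𝓝 0) := by
      simpa using hxαγ.const_mul c
    exact h.eventually (eventually_le_nhds (by norm_num))
  have hB : ∀ᶠ k in atTop, c * α k ^ γ ≤ 1 := by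
    have h : Tendsto (fun k => c * α k ^ γ) atTop (𝓝 0) := by
      simpa using hαγ.const_mul c
    exact h.eventually (eventually_le_nhds (by norm_num))
  have hbound : ∀ᶠ k in atTop, x k ≤ 4 := by
    filter_upwards [hA, hB] with k ha hb
    by_contra h
    push_neg at h
    have hx0 : (0:ℝ) < x k := by linarith
    have hs : x k ^ ((1:ℝ)/2) * x k ^ ((1:ℝ)/2) = x k := by
      rw [← Real.rpow_add hx0]; norm_num
    have h2 : (2:ℝ) ≤ x k ^ ((1:ℝ)/2) := by
      have h4 : (4:ℝ) ^ ((1:ℝ)/2) ≤ x k ^ ((1:ℝ)/2) :=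
        Real.rpow_le_rpow (by norm_num) h.le (by norm_num)
      have : (4:ℝ) ^ ((1:ℝ)/2) = 2 := by
        rw [show (4:ℝ) = 2 ^ (2:ℝ) by norm_num [Real.rpow_natCast],
          ← Real.rpow_mul (by norm_num)]
        norm_num
      linarith
    have key : x k ^ ((1+γ)/2) * α k ^ γ = (x k * α k) ^ γ * x k ^ ((1-γ)/2) := by
      rw [Real.mul_rpow (hx k) (hα k), show (1+γ)/2 = γ + (1-γ)/2 by ring,
        Real.rpow_add hx0]
      ring
    have hle : x k ^ ((1-γ)/2) ≤ x k ^ ((1:ℝ)/2) :=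
      Real.rpow_le_rpow_of_exponent_le (by linarith) (by linarith)
    have hik := hineq k
    rw [key] at hik
    have hnn1 : 0 ≤ (x k * α k) ^ γ := Real.rpow_nonneg (mul_nonneg (hx k) (hα k)) γ
    have hnn2 : 0 ≤ x k ^ ((1-γ)/2) := Real.rpow_nonneg (hx k) _
    have hnn3 : 0 ≤ x k ^ ((1:ℝ)/2) := Real.rpow_nonneg (hx k) _
    have h3 : x k ≤ (1/2) * x k ^ ((1:ℝ)/2) + 1 := by
      nlinarith [mul_le_mul_of_nonneg_left hle (mul_nonneg hc.le hnn1)]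
    nlinarith
  have hfinal : ∀ᶠ k in atTop, x k ≤ c * 5 * α k ^ γ := by
    filter_upwards [hbound] with k hb
    have h1 : x k ^ ((1+γ)/2) ≤ 4 := by
      calc x k ^ ((1+γ)/2) ≤ (4:ℝ) ^ ((1+γ)/2) :=
            Real.rpow_le_rpow (hx k) hb (by linarith)
        _ ≤ (4:ℝ) ^ (1:ℝ) := Real.rpow_le_rpow_of_exponent_le (by norm_num) (by linarith)
        _ = 4 := Real.rpow_one 4
    have hik := hineq k
    have hαγ0 : 0 ≤ α k ^ γ := Real.rpow_nonneg (hα k) γ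
    nlinarith [mul_le_mul_of_nonneg_right h1 hαγ0, hc.le]
  have hgt : Tendsto (fun k => c * 5 * α k ^ γ) atTop (𝓝 0) := by
    simpa using hαγ.const_mul (c*5)
  exact squeeze_zero' (Eventually.of_forall hx) hfinal hgt
end

section
/- Let H be a real Hilbert space, K ⊆ H nonempty closed convex, a a bounded symmetric coercive bilinear form with constants 0 < c₁ ≤ c₂ (c₁‖p‖² ≤ a(p,p) ≤ c₂‖p‖²), and λ > 0. For φ ∈ K let P(φ) be the unique solution of min_{y∈K} (1/2)a(y−φ,y−φ) + λℓ(φ)(y−φ), where ℓ : K → H* is Lipschitz with constant L. Then the map φ ↦ P(φ) satisfies ‖P(φ₁) − P(φ₂)‖ ≤ ((c₂ + λL)/c₁)‖φ₁ − φ₂‖; in particular P is Lipschitz continuous on K. -/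
/-- Cauchy–Schwarz for a symmetric nonnegative bilinear form. -/
lemma cs_bilin {H : Type*} [NormedAddCommGroup H] [InnerProductSpace ℝ H]
    (a : H →ₗ[ℝ] H →ₗ[ℝ] ℝ) (hsym : ∀ p y, a p y = a y p)
    (hpos : ∀ p, 0 ≤ a p p) (w u : H) : (a w u) ^ 2 ≤ a w w * a u u := by
  have key : ∀ t : ℝ, 0 ≤ a u u * (t * t) + (2 * a w u) * t + a w w := by
    intro t
    have h := hpos (w + t • u)
    have e : a (w + t • u) (w + t • u)
        = a u u * (t * t) + (2 * a w u) * t + a w w := by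
      simp only [map_add, map_smul, LinearMap.add_apply, LinearMap.smul_apply,
        smul_eq_mul, hsym u w]
      ring
    rw [e] at h; exact h
  have hd := discrim_le_zero key
  unfold discrim at hd
  nlinarith [hd]

/-- Lipschitz continuity of the projection-type map `P`: if `P φ` is
characterized by the variational inequality
`a(Pφ − φ, η − Pφ) + λ ℓ(φ)(η − Pφ) ≥ 0` for all `η ∈ K`, with `a` symmetric,
`c₁‖p‖² ≤ a(p,p) ≤ c₂‖p‖²` and `ℓ : K → H*` Lipschitz with constant `L`, then
`‖P φ₁ − P φ₂‖ ≤ ((c₂ + λL)/c₁)‖φ₁ − φ₂‖`. -/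
theorem stmt_13 {H : Type*} [NormedAddCommGroup H] [InnerProductSpace ℝ H] [CompleteSpace H]
    (K : Set H) (hKne : K.Nonempty) (hKcl : IsClosed K) (hKcv : Convex ℝ K)
    (a : H →ₗ[ℝ] H →ₗ[ℝ] ℝ) (hsym : ∀ p y, a p y = a y p)
    (c₁ c₂ : ℝ) (hc₁ : 0 < c₁) (hc₁₂ : c₁ ≤ c₂)
    (hcoer : ∀ p, c₁ * ‖p‖ ^ 2 ≤ a p p) (hbdd : ∀ p, a p p ≤ c₂ * ‖p‖ ^ 2)
    (lam : ℝ) (hlam : 0 < lam)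
    (ℓ : H → (H →L[ℝ] ℝ)) (L : ℝ) (hL : 0 ≤ L)
    (hLip : ∀ φ₁ ∈ K, ∀ φ₂ ∈ K, ‖ℓ φ₁ - ℓ φ₂‖ ≤ L * ‖φ₁ - φ₂‖)
    (P : H → H) (hPK : ∀ φ ∈ K, P φ ∈ K)
    (hVI : ∀ φ ∈ K, ∀ η ∈ K, 0 ≤ a (P φ - φ) (η - P φ) + lam * ℓ φ (η - P φ)) :
    ∀ φ₁ ∈ K, ∀ φ₂ ∈ K, ‖P φ₁ - P φ₂‖ ≤ ((c₂ + lam * L) / c₁) * ‖φ₁ - φ₂‖ := by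
  intro φ₁ h₁ φ₂ h₂
  have hc₂ : (0:ℝ) < c₂ := lt_of_lt_of_le hc₁ hc₁₂
  have hpos : ∀ p, 0 ≤ a p p := fun p => le_trans (by positivity) (hcoer p)
  by_cases hzero : P φ₁ - P φ₂ = 0
  · rw [hzero]
    simp only [norm_zero]
    positivity
  have hunorm : 0 < ‖P φ₁ - P φ₂‖ := norm_pos_iff.mpr hzero
  have hV1 := hVI φ₁ h₁ (P φ₂) (hPK φ₂ h₂)
  have hV2 := hVI φ₂ h₂ (P φ₁) (hPK φ₁ h₁)
  -- the ℓ term bound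
  have hℓ : (ℓ φ₂) (P φ₁ - P φ₂) - (ℓ φ₁) (P φ₁ - P φ₂)
      ≤ L * ‖φ₁ - φ₂‖ * ‖P φ₁ - P φ₂‖ := by
    have h1 : (ℓ φ₂ - ℓ φ₁) (P φ₁ - P φ₂)
        ≤ ‖ℓ φ₂ - ℓ φ₁‖ * ‖P φ₁ - P φ₂‖ :=
      le_trans (le_abs_self _) ((ℓ φ₂ - ℓ φ₁).le_opNorm _)
    have h2 : ‖ℓ φ₂ - ℓ φ₁‖ ≤ L * ‖φ₁ - φ₂‖ := by
      have := hLip φ₂ h₂ φ₁ h₁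
      rwa [norm_sub_rev φ₂ φ₁] at this
    have h3 : (ℓ φ₂ - ℓ φ₁) (P φ₁ - P φ₂)
        = (ℓ φ₂) (P φ₁ - P φ₂) - (ℓ φ₁) (P φ₁ - P φ₂) := by simp
    nlinarith [mul_le_mul_of_nonneg_right h2 (norm_nonneg (P φ₁ - P φ₂))]
  -- Cauchy–Schwarz bound
  have hcs : a (φ₁ - φ₂) (P φ₁ - P φ₂) ≤ c₂ * ‖φ₁ - φ₂‖ * ‖P φ₁ - P φ₂‖ := by
    have h := cs_bilin a hsym hpos (φ₁ - φ₂) (P φ₁ - P φ₂)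
    have hww := hbdd (φ₁ - φ₂)
    have huu := hbdd (P φ₁ - P φ₂)
    have hprod : a (φ₁ - φ₂) (φ₁ - φ₂) * a (P φ₁ - P φ₂) (P φ₁ - P φ₂)
        ≤ (c₂ * ‖φ₁ - φ₂‖ ^ 2) * (c₂ * ‖P φ₁ - P φ₂‖ ^ 2) :=
      mul_le_mul hww huu (hpos _) (by positivity)
    have hy : 0 ≤ c₂ * ‖φ₁ - φ₂‖ * ‖P φ₁ - P φ₂‖ := by positivity
    nlinarith [h, hprod, hy]
  have hco := hcoer (P φ₁ - P φ₂)
  -- expand everything into atoms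
  simp only [map_sub, LinearMap.sub_apply, ContinuousLinearMap.map_sub] at hV1 hV2 hℓ hcs hco
  -- main estimate
  have hmain : c₁ * ‖P φ₁ - P φ₂‖ ^ 2
      ≤ (c₂ + lam * L) * ‖φ₁ - φ₂‖ * ‖P φ₁ - P φ₂‖ := by
    have hlamℓ := mul_le_mul_of_nonneg_left hℓ hlam.le
    nlinarith [hV1, hV2, hcs, hco, hlamℓ]
  have key : c₁ * ‖P φ₁ - P φ₂‖ ≤ (c₂ + lam * L) * ‖φ₁ - φ₂‖ := by
    nlinarith [hmain, hunorm]
  rw [div_mul_eq_mul_div, le_div_iff₀ hc₁]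
  nlinarith [key, hc₁]
end

section
/- Let X be a real Banach space, j : X → ℝ Fréchet differentiable with j' Hölder continuous with exponent γ ∈ (0,1] and modulus L on a convex set containing all iterates, and suppose along a sequence the Armijo condition fails at step size α_k/β, i.e. σ(α_k/β)j'(φ_k)(v_k) < j(φ_k + (α_k/β)v_k) − j(φ_k), with j'(φ_k)(v_k) ≤ −c‖v_k‖² for some c > 0 and ‖v_k‖ ≤ M. If α_k → 0, then j'(φ_k)(v_k) → 0 and hence ‖v_k‖ → 0. -/
open Filter Topology

/-- if `j ∈ C^{1,γ}` on a convex set containing the iterates, the Armijo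
condition fails at step size `α_k/β`, the directions satisfy the descent estimate
`j'(φ_k)(v_k) ≤ −c‖v_k‖²` and are bounded, and `α_k → 0`, then `j'(φ_k)(v_k) → 0` and
`‖v_k‖ → 0`. -/
theorem stmt_16 {X : Type*} [NormedAddCommGroup X] [NormedSpace ℝ X] [CompleteSpace X]
    (S : Set X) (hS : Convex ℝ S)
    (j : X → ℝ) (j' : X → (X →L[ℝ] ℝ))
    (hdiff : ∀ u ∈ S, HasFDerivWithinAt j (j' u) S u)
    (γ L : ℝ) (hγ : 0 < γ) (hγ1 : γ ≤ 1) (hL : 0 ≤ L)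
    (hHolder : ∀ u ∈ S, ∀ w ∈ S, ‖j' u - j' w‖ ≤ L * ‖u - w‖ ^ γ)
    (σ β : ℝ) (hσ : 0 < σ) (hσ1 : σ < 1) (hβ : 0 < β) (hβ1 : β < 1)
    (φ v : ℕ → X) (α : ℕ → ℝ) (hα : ∀ k, 0 < α k)
    (hiterS : ∀ k, φ k ∈ S) (hstepS : ∀ k, φ k + (α k / β) • v k ∈ S)
    (hfail : ∀ k, σ * (α k / β) * j' (φ k) (v k) <
      j (φ k + (α k / β) • v k) - j (φ k))
    (c : ℝ) (hc : 0 < c) (hdesc : ∀ k, j' (φ k) (v k) ≤ -c * ‖v k‖ ^ 2)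
    (M : ℝ) (hM : ∀ k, ‖v k‖ ≤ M)
    (hαto0 : Tendsto α atTop (𝓝 0)) :
    Tendsto (fun k => j' (φ k) (v k)) atTop (𝓝 0) ∧
    Tendsto (fun k => ‖v k‖) atTop (𝓝 0) := by
  have hM0 : 0 ≤ M := le_trans (norm_nonneg _) (hM 0)
  have hσ' : 0 < 1 - σ := by linarith
  set g : ℕ → ℝ := fun k => -(j' (φ k) (v k)) with hg
  have hg0 : ∀ k, 0 ≤ g k := by
    intro k
    have h1 := hdesc k
    have h2 : (0:ℝ) ≤ c * ‖v k‖ ^ 2 := by positivity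
    simp only [hg]; linarith
  set C : ℝ := L * (M ^ γ * M) / (1 - σ) with hC
  have key : ∀ k, g k ≤ C * (α k / β) ^ γ := by
    intro k
    set t := α k / β with htdef
    have ht0 : 0 < t := div_pos (hα k) hβ
    set a := φ k with ha
    set w := t • v k with hw
    have hseg : segment ℝ a (a + w) ⊆ S := hS.segment_subset (hiterS k) (hstepS k)
    have hwnorm : ‖w‖ = t * ‖v k‖ := by
      rw [hw, norm_smul, Real.norm_eq_abs, abs_of_pos ht0]
    -- Taylor-type estimate
    have taylor : j (a + w) - j a - j' a w ≤ L * ‖w‖ ^ γ * ‖w‖ := by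
      have hderiv : ∀ x ∈ segment ℝ a (a + w),
          HasFDerivWithinAt (fun x => j x - j' a x) (j' x - j' a) (segment ℝ a (a + w)) x := by
        intro x hx
        exact ((hdiff x (hseg hx)).mono hseg).sub ((j' a).hasFDerivAt.hasFDerivWithinAt)
      have hbound : ∀ x ∈ segment ℝ a (a + w), ‖j' x - j' a‖ ≤ L * ‖w‖ ^ γ := by
        intro x hx
        refine (hHolder x (hseg hx) a (hiterS k)).trans ?_
        have hxa : ‖x - a‖ ≤ ‖w‖ := by
          obtain ⟨p, q, hp, hq, hpq, rfl⟩ := hx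
          have : p • a + q • (a + w) - a = q • w := by
            have hp1 : p = 1 - q := by linarith
            rw [hp1]; module
          rw [this, norm_smul, Real.norm_eq_abs, abs_of_nonneg hq]
          calc q * ‖w‖ ≤ 1 * ‖w‖ := by
                have := norm_nonneg w; nlinarith
            _ = ‖w‖ := one_mul _
        exact mul_le_mul_of_nonneg_left
          (Real.rpow_le_rpow (norm_nonneg _) hxa hγ.le) hL
      have := Convex.norm_image_sub_le_of_norm_hasFDerivWithin_le hderiv hbound
        (convex_segment a (a + w)) (left_mem_segment ℝ a (a + w))
        (right_mem_segment ℝ a (a + w))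
      have heq : (j (a + w) - j' a (a + w)) - (j a - j' a a)
          = j (a + w) - j a - j' a w := by
        have : j' a (a + w) = j' a a + j' a w := by rw [map_add]
        linarith
      have hnorm : ‖(a + w) - a‖ = ‖w‖ := by rw [add_sub_cancel_left]
      rw [hnorm] at this
      have habs : |j (a + w) - j' a (a + w) - (j a - j' a a)| ≤ L * ‖w‖ ^ γ * ‖w‖ := by
        rw [← Real.norm_eq_abs]; exact this
      rw [heq] at habs
      exact le_trans (le_abs_self _) habs
    -- combine with failure of Armijo
    have hjw : j' a w = t * j' a (v k) := by rw [hw, map_smul, smul_eq_mul]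
    have hf := hfail k
    have h1 : σ * t * j' a (v k) < t * j' a (v k) + L * ‖w‖ ^ γ * ‖w‖ := by
      calc σ * t * j' a (v k) < j (a + w) - j a := hf
        _ ≤ t * j' a (v k) + L * ‖w‖ ^ γ * ‖w‖ := by
            have := taylor; rw [hjw] at this; linarith
    -- ‖w‖^γ = t^γ * ‖v‖^γ
    have hwγ : ‖w‖ ^ γ = t ^ γ * ‖v k‖ ^ γ := by
      rw [hwnorm, Real.mul_rpow ht0.le (norm_nonneg _)]
    have hvγ : ‖v k‖ ^ γ ≤ M ^ γ := Real.rpow_le_rpow (norm_nonneg _) (hM k) hγ.le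
    have htγ0 : 0 < t ^ γ := Real.rpow_pos_of_pos ht0 γ
    -- (1-σ) * t * g k < L * t^γ * ‖v‖^γ * t * ‖v‖ ≤ L * t^γ * M^γ * t * M
    have h2 : (1 - σ) * (t * g k) < L * (t ^ γ * (M ^ γ * M)) * t := by
      have hbig : L * ‖w‖ ^ γ * ‖w‖ ≤ L * (t ^ γ * (M ^ γ * M)) * t := by
        rw [hwγ, hwnorm]
        have hvM : ‖v k‖ ≤ M := hM k
        have h0v : 0 ≤ ‖v k‖ := norm_nonneg _
        have h0vγ : 0 ≤ ‖v k‖ ^ γ := Real.rpow_nonneg h0v γ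
        have h0Mγ : 0 ≤ M ^ γ := Real.rpow_nonneg hM0 γ
        have hprod : ‖v k‖ ^ γ * ‖v k‖ ≤ M ^ γ * M := mul_le_mul hvγ hvM h0v h0Mγ
        calc L * (t ^ γ * ‖v k‖ ^ γ) * (t * ‖v k‖)
            = L * (t ^ γ * (‖v k‖ ^ γ * ‖v k‖)) * t := by ring
          _ ≤ L * (t ^ γ * (M ^ γ * M)) * t := by gcongr
      simp only [hg]
      nlinarith
    have h3 : (1 - σ) * g k ≤ L * (t ^ γ * (M ^ γ * M)) := by
      have := (mul_lt_mul_iff_left₀ ht0).mp (by nlinarith : ((1 - σ) * g k) * t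
        < (L * (t ^ γ * (M ^ γ * M))) * t)
      linarith
    have hfin : g k ≤ L * (t ^ γ * (M ^ γ * M)) / (1 - σ) :=
      (le_div_iff₀ hσ').mpr (by linarith)
    show g k ≤ C * t ^ γ
    calc g k ≤ L * (t ^ γ * (M ^ γ * M)) / (1 - σ) := hfin
      _ = C * t ^ γ := by rw [hC]; ring
  -- upper bound tends to 0
  have hupper : Tendsto (fun k => C * (α k / β) ^ γ) atTop (𝓝 0) := by
    have h1 : Tendsto (fun k => α k / β) atTop (𝓝 0) := by
      simpa using hαto0.div_const β
    have h2 : Tendsto (fun k => (α k / β) ^ γ) atTop (𝓝 ((0:ℝ) ^ γ)) :=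
      h1.rpow_const (Or.inr hγ.le)
    rw [Real.zero_rpow hγ.ne'] at h2
    simpa using h2.const_mul C
  have hgto0 : Tendsto g atTop (𝓝 0) := squeeze_zero hg0 key hupper
  constructor
  · have := hgto0.neg
    rw [neg_zero] at this
    simpa [hg] using this
  · have hsq : Tendsto (fun k => Real.sqrt (g k / c)) atTop (𝓝 0) := by
      have := (hgto0.div_const c).sqrt
      simpa using this
    refine squeeze_zero (fun k => norm_nonneg _) (fun k => ?_) hsq
    rw [Real.le_sqrt (norm_nonneg _) (div_nonneg (hg0 k) hc.le), le_div_iff₀ hc]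
    show ‖v k‖ ^ 2 * c ≤ -(j' (φ k)) (v k)
    nlinarith [hdesc k]
end

section
/- Let H be a real Hilbert space, K ⊆ H nonempty closed convex, j : H → ℝ continuously Fréchet differentiable and bounded below on K, with j' Lipschitz on K. Let {a_k} be symmetric bilinear forms with c₁‖p‖² ≤ a_k(p,p) ≤ c₂‖p‖² (constants independent of k), λ_k ∈ [λ_min, λ_max] ⊆ (0,∞), and let φ_{k+1} = φ_k + α_k v_k be generated by the projected gradient method with v_k = P_k(φ_k) − φ_k (P_k the a_k-projection-type step) and Armijo backtracking with parameters σ, β ∈ (0,1). Then every accumulation point of {φ_k} in the norm topology of H is a stationary point of j on K. -/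
open Filter Topology

section Aux
variable {H : Type*} [NormedAddCommGroup H] [InnerProductSpace ℝ H]

lemma bilin_expand (a : H →ₗ[ℝ] H →ₗ[ℝ] ℝ) (hsym : ∀ p y, a p y = a y p) (p w : H) (t : ℝ) :
    a (p + t • w) (p + t • w) = a p p + 2 * t * a p w + t ^ 2 * a w w := by
  simp only [map_add, map_smul, LinearMap.add_apply, LinearMap.smul_apply, smul_eq_mul,
    hsym w p]
  ring

lemma bilin_cs (a : H →ₗ[ℝ] H →ₗ[ℝ] ℝ) (hsym : ∀ p y, a p y = a y p)
    (hpos : ∀ p, 0 ≤ a p p) (c₂ : ℝ) (hc₂ : 0 ≤ c₂) (habdd : ∀ p, a p p ≤ c₂ * ‖p‖ ^ 2) (p w : H) :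
    a p w ≤ c₂ * ‖p‖ * ‖w‖ := by
  have hd : discrim (a w w) (2 * a p w) (a p p) ≤ 0 := by
    apply discrim_le_zero
    intro t
    have := hpos (p + t • w)
    rw [bilin_expand a hsym p w t] at this
    nlinarith [this]
  rw [discrim] at hd
  have h1 : (a p w) ^ 2 ≤ a p p * a w w := by nlinarith
  have h2 : a p p * a w w ≤ (c₂ * ‖p‖ ^ 2) * (c₂ * ‖w‖ ^ 2) := by
    have := hpos p; have := hpos w
    have := habdd p; have := habdd w
    nlinarith
  by_contra hcon
  push_neg at hcon
  have hge : 0 ≤ c₂ * ‖p‖ * ‖w‖ := by positivity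
  nlinarith [mul_self_lt_mul_self hge hcon]

end Aux

set_option maxHeartbeats 1000000 in
/-- global convergence of the variable metric projection type method in the
classical Hilbert space setting: every norm accumulation point of the iterates is a
stationary point of `j` on `K`. -/
theorem stmt_17 {H : Type*} [NormedAddCommGroup H] [InnerProductSpace ℝ H] [CompleteSpace H]
    (K : Set H) (hKne : K.Nonempty) (hKcl : IsClosed K) (hKcv : Convex ℝ K)
    -- j continuously Fréchet differentiable, bounded below on K, j' Lipschitz on K
    (j : H → ℝ) (j' : H → (H →L[ℝ] ℝ)) (hdiff : ∀ x, HasFDerivAt j (j' x) x)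
    (hcont : Continuous j')
    (B : ℝ) (hbddbelow : ∀ x ∈ K, B ≤ j x)
    (L : ℝ) (hLip : ∀ x ∈ K, ∀ y ∈ K, ‖j' x - j' y‖ ≤ L * ‖x - y‖)
    -- uniformly coercive and bounded symmetric bilinear forms a_k
    (a : ℕ → (H →ₗ[ℝ] H →ₗ[ℝ] ℝ)) (hsym : ∀ k p y, a k p y = a k y p)
    (c₁ c₂ : ℝ) (hc₁ : 0 < c₁) (hc₁₂ : c₁ ≤ c₂)
    (hcoer : ∀ k p, c₁ * ‖p‖ ^ 2 ≤ a k p p) (habdd : ∀ k p, a k p p ≤ c₂ * ‖p‖ ^ 2)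
    -- scaling parameters
    (lam : ℕ → ℝ) (lammin lammax : ℝ) (hlammin : 0 < lammin)
    (hlam : ∀ k, lammin ≤ lam k ∧ lam k ≤ lammax)
    -- Armijo parameters
    (σ β : ℝ) (hσ : 0 < σ) (hσ1 : σ < 1) (hβ : 0 < β) (hβ1 : β < 1)
    -- iterates, projection-type steps and search directions
    (φ φbar v : ℕ → H) (hφK : ∀ k, φ k ∈ K) (hφbarK : ∀ k, φbar k ∈ K)
    (hmin : ∀ k, ∀ y ∈ K,
      (1 / 2) * a k (φbar k - φ k) (φbar k - φ k) + lam k * j' (φ k) (φbar k - φ k) ≤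
      (1 / 2) * a k (y - φ k) (y - φ k) + lam k * j' (φ k) (y - φ k))
    (hv : ∀ k, v k = φbar k - φ k)
    -- Armijo backtracking: α_k = β^{m_k} with m_k minimal
    (m : ℕ → ℕ)
    (hArmijo : ∀ k, j (φ k + β ^ m k • v k) ≤ j (φ k) + β ^ m k * σ * j' (φ k) (v k))
    (hminimal : ∀ k, ∀ n < m k,
      ¬ (j (φ k + β ^ n • v k) ≤ j (φ k) + β ^ n * σ * j' (φ k) (v k)))
    (hiter : ∀ k, φ (k + 1) = φ k + β ^ m k • v k) :
    -- conclusion: every accumulation point in the norm topology is stationary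
    ∀ x : H, (∃ ψ : ℕ → ℕ, StrictMono ψ ∧ Tendsto (fun i => φ (ψ i)) atTop (𝓝 x)) →
      ∀ η ∈ K, 0 ≤ j' x (η - x) := by
  have hlmax : 0 < lammax := lt_of_lt_of_le hlammin (le_trans (hlam 0).1 (hlam 0).2)
  have hc₂ : (0:ℝ) ≤ c₂ := le_trans hc₁.le hc₁₂
  set α : ℕ → ℝ := fun k => β ^ m k with hαdef
  have hαpos : ∀ k, 0 < α k := fun k => pow_pos hβ _
  have hapos : ∀ k p, 0 ≤ a k p p := fun k p => le_trans (by positivity) (hcoer k p)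
  set c : ℝ := c₁ / (2 * lammax) with hcdef
  have hcpos : 0 < c := by positivity
  set L1 : ℝ := max L 1 with hL1def
  have hL1pos : (0:ℝ) < L1 := lt_of_lt_of_le one_pos (le_max_right L 1)
  -- Step A : descent direction
  have hkey : ∀ k, j' (φ k) (v k) ≤ -(c * ‖v k‖ ^ 2) := by
    intro k
    have h0 := hmin k (φ k) (hφK k)
    rw [sub_self] at h0
    simp only [map_zero, LinearMap.zero_apply, mul_zero, add_zero,
      ContinuousLinearMap.map_zero] at h0
    rw [← hv k] at h0
    have hco := hcoer k (v k)
    have hl1 := (hlam k).1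
    have hl2 := (hlam k).2
    have hlk : 0 < lam k := lt_of_lt_of_le hlammin hl1
    have hc' : c * (2 * lammax) = c₁ := by
      rw [hcdef]; field_simp
    have hV : (0:ℝ) ≤ ‖v k‖ ^ 2 := by positivity
    by_contra hcon
    push_neg at hcon
    nlinarith [mul_pos hlk (by linarith : 0 < j' (φ k) (v k) + c * ‖v k‖ ^ 2),
      mul_nonneg (mul_nonneg (by linarith : (0:ℝ) ≤ lammax - lam k) hcpos.le) hV]
  -- Step C : variational inequality for the projection-type step
  have hVI : ∀ k, ∀ y ∈ K, 0 ≤ a k (v k) (y - φbar k) + lam k * j' (φ k) (y - φbar k) := by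
    intro k y hy
    set w := y - φbar k with hwdef
    by_contra hcon
    push_neg at hcon
    set s : ℝ := a k (v k) w + lam k * j' (φ k) w with hsdef
    set A : ℝ := a k w w with hAdef
    have hA : 0 ≤ A := hapos k w
    have hspos : 0 < -s := by simpa [hsdef] using neg_pos.mpr hcon
    set t : ℝ := min 1 ((-s) / (A + 1)) with htdef
    have ht0 : 0 < t := lt_min one_pos (by positivity)
    have ht1 : t ≤ 1 := min_le_left _ _
    have htA : t * A < -s := by
      have h1 : t ≤ (-s) / (A + 1) := min_le_right _ _
      have h2 : t * A ≤ ((-s) / (A + 1)) * A := mul_le_mul_of_nonneg_right h1 hA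
      have h3 : ((-s) / (A + 1)) * A < -s := by
        rw [div_mul_eq_mul_div, div_lt_iff₀ (by linarith)]
        nlinarith
      linarith
    have hyt : φbar k + t • w ∈ K := by
      have hm := hKcv (hφbarK k) hy (by linarith : (0:ℝ) ≤ 1 - t) ht0.le (by ring)
      convert hm using 1
      rw [hwdef]; module
    have hd : φbar k + t • w - φ k = v k + t • w := by rw [hv]; abel
    have hM0 := hmin k (φbar k + t • w) hyt
    rw [hd, ← hv k, bilin_expand (a k) (hsym k) (v k) w t] at hM0
    simp only [map_add, map_smul, smul_eq_mul, ContinuousLinearMap.map_add,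
      ContinuousLinearMap.map_smul] at hM0
    nlinarith [hM0, mul_lt_mul_of_pos_left htA ht0, mul_pos ht0 ht0]
  -- Step D : descent estimate from Lipschitz derivative
  have hdesc : ∀ k, ∀ t : ℝ, 0 < t → t ≤ 1 →
      j (φ k + t • v k) - j (φ k) - t * j' (φ k) (v k) ≤ L1 * t ^ 2 * ‖v k‖ ^ 2 := by
    intro k t ht0 ht1
    have hmem : φ k + t • v k ∈ K := by
      have hm := hKcv (hφK k) (hφbarK k) (by linarith : (0:ℝ) ≤ 1 - t) ht0.le (by ring)
      convert hm using 1
      rw [hv]; module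
    have hsegK : segment ℝ (φ k) (φ k + t • v k) ⊆ K := hKcv.segment_subset (hφK k) hmem
    have hbound : ∀ z ∈ segment ℝ (φ k) (φ k + t • v k),
        ‖j' z - j' (φ k)‖ ≤ L1 * (t * ‖v k‖) := by
      intro z hz
      obtain ⟨u1, u2, hu1, hu2, huu, rfl⟩ := hz
      have hz2 : u1 • φ k + u2 • (φ k + t • v k) - φ k = (u2 * t) • v k := by
        have h1 : u1 = 1 - u2 := by linarith
        rw [h1]; module
      have hn : ‖u1 • φ k + u2 • (φ k + t • v k) - φ k‖ = u2 * t * ‖v k‖ := by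
        rw [hz2, norm_smul, Real.norm_eq_abs, abs_of_nonneg (by positivity)]
      have hlip := hLip _ (hsegK ⟨u1, u2, hu1, hu2, huu, rfl⟩) (φ k) (hφK k)
      rw [hn] at hlip
      have hstep1 : L * (u2 * t * ‖v k‖) ≤ L1 * (u2 * t * ‖v k‖) :=
        mul_le_mul_of_nonneg_right (le_max_left L 1) (by positivity)
      have hstep2 : L1 * (u2 * t * ‖v k‖) ≤ L1 * (t * ‖v k‖) := by
        apply mul_le_mul_of_nonneg_left _ hL1pos.le
        nlinarith [norm_nonneg (v k), mul_nonneg (mul_nonneg (by linarith : (0:ℝ) ≤ 1 - u2) ht0.le) (norm_nonneg (v k))]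
      linarith
    have hmvt := Convex.norm_image_sub_le_of_norm_hasFDerivWithin_le'
      (f := j) (f' := j') (φ := j' (φ k)) (C := L1 * (t * ‖v k‖))
      (s := segment ℝ (φ k) (φ k + t • v k))
      (fun z _ => (hdiff z).hasFDerivWithinAt) hbound (convex_segment _ _)
      (left_mem_segment ℝ _ _) (right_mem_segment ℝ _ _)
    have hyx : φ k + t • v k - φ k = t • v k := by abel
    have happ : (j' (φ k)) (t • v k) = t * j' (φ k) (v k) := by
      rw [ContinuousLinearMap.map_smul, smul_eq_mul]
    rw [hyx, happ, norm_smul] at hmvt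
    have htt : ‖t‖ = t := by rw [Real.norm_eq_abs, abs_of_nonneg ht0.le]
    rw [htt] at hmvt
    rw [Real.norm_eq_abs] at hmvt
    have hle := (abs_le.mp hmvt).2
    nlinarith [hle]
  -- Step E : α_k ‖v_k‖² → 0
  have hjneg : ∀ k, j' (φ k) (v k) ≤ 0 := by
    intro k
    have := hkey k
    nlinarith [hcpos, sq_nonneg ‖v k‖]
  have hdec : ∀ k, j (φ (k + 1)) ≤ j (φ k) + α k * σ * j' (φ k) (v k) := by
    intro k; rw [hiter k]; exact hArmijo k
  have hanti : Antitone fun k => j (φ k) := by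
    apply antitone_nat_of_succ_le
    intro k
    have h1 := hdec k
    nlinarith [mul_nonneg (hαpos k).le hσ.le, hjneg k]
  have hbdd : BddBelow (Set.range fun k => j (φ k)) := by
    refine ⟨B, ?_⟩
    rintro _ ⟨k, rfl⟩
    exact hbddbelow _ (hφK k)
  have htend : Tendsto (fun k => j (φ k)) atTop (𝓝 (⨅ k, j (φ k))) :=
    tendsto_atTop_ciInf hanti hbdd
  have hdiff0 : Tendsto (fun k => j (φ k) - j (φ (k + 1))) atTop (𝓝 0) := by
    have h2 : Tendsto (fun k => j (φ (k + 1))) atTop (𝓝 (⨅ k, j (φ k))) :=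
      htend.comp (tendsto_add_atTop_nat 1)
    have h3 := htend.sub h2
    rw [sub_self] at h3
    exact h3
  have hF0 : Tendsto (fun k => σ * c * (α k * ‖v k‖ ^ 2)) atTop (𝓝 0) := by
    apply squeeze_zero (fun k => by positivity) _ hdiff0
    intro k
    have h1 := hdec k
    have h2 := hkey k
    nlinarith [mul_le_mul_of_nonneg_left h2 (mul_nonneg (hαpos k).le hσ.le)]
  have hαv : Tendsto (fun k => α k * ‖v k‖ ^ 2) atTop (𝓝 0) := by
    have h := hF0.const_mul ((σ * c)⁻¹)
    rw [mul_zero] at h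
    refine h.congr fun k => ?_
    exact inv_mul_cancel_left₀ (ne_of_gt (by positivity)) _
  -- main argument
  rintro x ⟨ψ, hψmono, hψtend⟩ η hη
  have hψat : Tendsto ψ atTop atTop := hψmono.tendsto_atTop
  have hv0 : Tendsto (fun i => ‖v (ψ i)‖) atTop (𝓝 0) := by
    by_contra hcon
    rw [Metric.tendsto_atTop] at hcon
    push_neg at hcon
    obtain ⟨ε, hε, hfreq⟩ := hcon
    set t0 : ℝ := min (β * ((1 - σ) * c) / L1) 1 with ht0def
    have ht0pos : 0 < t0 :=
      lt_min (div_pos (mul_pos hβ (mul_pos (by linarith : (0:ℝ) < 1 - σ) hcpos)) hL1pos) one_pos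
    have hαvψ : Tendsto (fun i => α (ψ i) * ‖v (ψ i)‖ ^ 2) atTop (𝓝 0) := hαv.comp hψat
    have hev : ∀ᶠ i in atTop, α (ψ i) * ‖v (ψ i)‖ ^ 2 < ε ^ 2 * t0 := by
      have := hαvψ.eventually (eventually_lt_nhds (show (0:ℝ) < ε ^ 2 * t0 by positivity))
      exact this
    obtain ⟨N, hN⟩ := eventually_atTop.mp hev
    obtain ⟨i, hiN, hibig⟩ := hfreq N
    have hdist : ε ≤ ‖v (ψ i)‖ := by
      rw [Real.dist_eq, sub_zero, abs_of_nonneg (norm_nonneg _)] at hibig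
      exact hibig
    set k := ψ i with hkdef
    set V : ℝ := ‖v k‖ with hVdef
    set g : ℝ := j' (φ k) (v k) with hgdef
    have hsmall : α k * V ^ 2 < ε ^ 2 * t0 := hN i hiN
    have hαlt : α k < t0 := by
      nlinarith [mul_le_mul_of_nonneg_left (show ε ^ 2 ≤ V ^ 2 by nlinarith [hdist, hε])
        (hαpos k).le, mul_pos hε hε]
    have hm0 : 0 < m k := by
      by_contra hm
      push_neg at hm
      interval_cases h : m k
      · have : α k = 1 := by rw [show α k = β ^ m k from rfl, h, pow_zero]
        have : (1:ℝ) < t0 := by rw [← this]; exact hαlt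
        have := min_le_right (β * ((1 - σ) * c) / L1) 1
        linarith
    obtain ⟨n, hn⟩ : ∃ n, m k = n + 1 := ⟨m k - 1, by omega⟩
    set t : ℝ := β ^ n with htdef
    have ht0' : 0 < t := pow_pos hβ _
    have ht1 : t ≤ 1 := pow_le_one₀ hβ.le hβ1.le
    have hαt : α k = t * β := by
      show β ^ m k = t * β
      rw [hn, pow_succ, htdef]
    have hfail := hminimal k n (by omega)
    push_neg at hfail
    have hA2 : j (φ k) + t * σ * g < j (φ k + t • v k) := hfail
    have hA1 : j (φ k + t • v k) - j (φ k) - t * g ≤ L1 * t ^ 2 * V ^ 2 := hdesc k t ht0' ht1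
    have hA3 : g ≤ -(c * V ^ 2) := hkey k
    have e1 : t * ((1 - σ) * (-g)) < t * (L1 * t * V ^ 2) := by nlinarith
    have e2 : (1 - σ) * (-g) < L1 * t * V ^ 2 := (mul_lt_mul_iff_right₀ ht0').mp e1
    have hV2pos : 0 < V ^ 2 := by nlinarith [hdist, hε]
    have e3 : (1 - σ) * c < L1 * t := by
      nlinarith [mul_le_mul_of_nonneg_left hA3 (by linarith : (0:ℝ) ≤ 1 - σ)]
    have e4 : t0 ≤ β * ((1 - σ) * c) / L1 := min_le_left _ _
    have e5 : β * ((1 - σ) * c) / L1 < t * β := by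
      rw [div_lt_iff₀ hL1pos]
      nlinarith
    linarith [hαlt, e4, e5, hαt.ge, hαt.le]
  -- Step G : pass to the limit in the variational inequality
  have hvt : Tendsto (fun i => v (ψ i)) atTop (𝓝 0) :=
    tendsto_zero_iff_norm_tendsto_zero.mpr hv0
  have hφbart : Tendsto (fun i => φbar (ψ i)) atTop (𝓝 x) := by
    have heq : (fun i => φbar (ψ i)) = fun i => φ (ψ i) + v (ψ i) := by
      funext i; rw [hv]; abel
    rw [heq]
    simpa using hψtend.add hvt
  have h2 : Tendsto (fun i => η - φbar (ψ i)) atTop (𝓝 (η - x)) :=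
    tendsto_const_nhds.sub hφbart
  have hev : Tendsto (fun i => j' (φ (ψ i)) (η - φbar (ψ i))) atTop (𝓝 (j' x (η - x))) := by
    have h1 : Tendsto (fun i => j' (φ (ψ i))) atTop (𝓝 (j' x)) :=
      (hcont.tendsto x).comp hψtend
    exact (isBoundedBilinearMap_apply.continuous.tendsto (j' x, η - x)).comp
      (h1.prodMk_nhds h2)
  have hlow : ∀ i, -(c₂ / lammin) * (‖v (ψ i)‖ * ‖η - φbar (ψ i)‖) ≤
      j' (φ (ψ i)) (η - φbar (ψ i)) := by
    intro i
    set k := ψ i with hkdef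
    have hvi := hVI k η hη
    have hcs := bilin_cs (a k) (hsym k) (hapos k) c₂ hc₂ (habdd k) (v k) (η - φbar k)
    have hl1 := (hlam k).1
    have hlk : 0 < lam k := lt_of_lt_of_le hlammin hl1
    set N : ℝ := ‖v k‖ * ‖η - φbar k‖ with hNdef
    have hN0 : 0 ≤ N := by positivity
    have hCeq : c₂ = c₂ / lammin * lammin := by field_simp
    by_contra hc
    push_neg at hc
    nlinarith [mul_pos hlk (show 0 < -(c₂ / lammin * N) - j' (φ k) (η - φbar k) by linarith),
      mul_nonneg (mul_nonneg (div_nonneg hc₂ hlammin.le) hN0)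
        (by linarith : (0:ℝ) ≤ lam k - lammin)]
  have hlowt : Tendsto (fun i => -(c₂ / lammin) * (‖v (ψ i)‖ * ‖η - φbar (ψ i)‖)) atTop
      (𝓝 0) := by
    have hnorm : Tendsto (fun i => ‖η - φbar (ψ i)‖) atTop (𝓝 ‖η - x‖) := h2.norm
    have := (hv0.mul hnorm).const_mul (-(c₂ / lammin))
    simpa using this
  exact le_of_tendsto_of_tendsto' hlowt hev hlow
end
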